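/- arXiv:2604.20330 — 2 statements merged into one kernel-verified Lean document; each statement's English description precedes it below -/
import Mathlib

section
/- Let Φ = (φ, ψ) : 𝔻² → 𝔻² be holomorphic on 𝔻² and extend to a C² map on the closed bidisc, and let ζ = (ζ1, ζ2) ∈ 𝕋² be a point with Φ(ζ) ∈ 𝕋². Then: (i) for each component χ ∈ {φ, ψ} and each j ∈ {1,2}, the number ζj · (∂χ/∂zj)(ζ) / χ(ζ) is real; and (ii) the complex 2×2 Jacobian matrix d_ζΦ = ((∂Φ_ℓ/∂zj)(ζ))_{ℓ,j} is invertible if and only if the two real vectors (ζ1 (∂φ/∂z1)(ζ)/φ(ζ), ζ2 (∂φ/∂z2)(ζ)/φ(ζ)) and (ζ1 (∂ψ/∂z1)(ζ)/ψ(ζ), ζ2 (∂ψ/∂z2)(ζ)/ψ(ζ)) are linearly independent over ℝ. (These vectors are the angular gradients of the local defining functions of the boundary level curves of φ and ψ, so the equivalence says that invertibility of d_ζΦ — the first-order condition — is equivalent to transversal intersection of the boundary level curves at ζ.) -/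
open MeasureTheory Complex Set

noncomputable section

/-- The open unit bidisc in ℂ². -/
def bidisk : Set (ℂ × ℂ) := {z | ‖z.1‖ < 1 ∧ ‖z.2‖ < 1}

/-- The weight (1-|z₁|²)^β (1-|z₂|²)^β. -/
def wWeight (β : ℝ) (z : ℂ × ℂ) : ℝ :=
  (1 - ‖z.1‖ ^ 2) ^ β * (1 - ‖z.2‖ ^ 2) ^ β

/-- Weighted volume V_β of a set E ⊆ 𝔻². -/
def wVol (β : ℝ) (E : Set (ℂ × ℂ)) : ℝ := ∫ z in E, wWeight β z

/-- Boundedness of the composition operator C_Φ on A²_β(𝔻²). -/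
def CompBounded (β : ℝ) (Φ : ℂ × ℂ → ℂ × ℂ) : Prop :=
  ∃ C : ℝ, 0 < C ∧ ∀ f : ℂ × ℂ → ℂ, DifferentiableOn ℂ f bidisk →
    (∫ z in bidisk, ‖f (Φ z)‖ ^ 2 * wWeight β z) ≤
      C * ∫ z in bidisk, ‖f z‖ ^ 2 * wWeight β z

/-- Evaluation of a two-variable polynomial at a point of ℂ². -/
def pev (P : MvPolynomial (Fin 2) ℂ) (z : ℂ × ℂ) : ℂ := MvPolynomial.eval ![z.1, z.2] P

/-- `Pt` is the reflection p̃(z₁,z₂) = z₁ⁿ z₂ᵐ conj(p(1/z̄₁, 1/z̄₂)) of `P`,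
where (n,m) is the bidegree of `P`. -/
def IsReflection (P Pt : MvPolynomial (Fin 2) ℂ) : Prop :=
  ∀ z : ℂ × ℂ, z.1 ≠ 0 → z.2 ≠ 0 →
    pev Pt z = z.1 ^ (MvPolynomial.degreeOf 0 P) * z.2 ^ (MvPolynomial.degreeOf 1 P) *
      (starRingEnd ℂ) (pev P (1 / (starRingEnd ℂ) z.1, 1 / (starRingEnd ℂ) z.2))

/-- `P` has no zeros in the closed bidisc outside the bitorus 𝕋². -/
def StableOnBidisk (P : MvPolynomial (Fin 2) ℂ) : Prop :=
  ∀ z : ℂ × ℂ, ‖z.1‖ ≤ 1 → ‖z.2‖ ≤ 1 →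
    ¬(‖z.1‖ = 1 ∧ ‖z.2‖ = 1) → pev P z ≠ 0

/-- Wirtinger derivative ∂/∂z₁ within a set (for boundary points, via the C² extension). -/
def wirt1 (f : ℂ × ℂ → ℂ) (s : Set (ℂ × ℂ)) (z : ℂ × ℂ) : ℂ :=
  (fderivWithin ℝ f s z (1, 0) - Complex.I * fderivWithin ℝ f s z (Complex.I, 0)) / 2

/-- Wirtinger derivative ∂/∂z₂ within a set. -/
def wirt2 (f : ℂ × ℂ → ℂ) (s : Set (ℂ × ℂ)) (z : ℂ × ℂ) : ℂ :=
  (fderivWithin ℝ f s z (0, 1) - Complex.I * fderivWithin ℝ f s z (0, Complex.I)) / 2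

section Statement0Aux

open Topology Filter

lemma bidisk_eq : bidisk = Metric.ball (0:ℂ) 1 ×ˢ Metric.ball (0:ℂ) 1 := by
  ext z
  simp [bidisk, Metric.mem_ball, Complex.dist_eq]

lemma isOpen_bidisk : IsOpen bidisk := by
  rw [bidisk_eq]; exact Metric.isOpen_ball.prod Metric.isOpen_ball

lemma closure_bidisk :
    closure bidisk = Metric.closedBall (0:ℂ) 1 ×ˢ Metric.closedBall (0:ℂ) 1 := by
  rw [bidisk_eq, closure_prod_eq, closure_ball (0:ℂ) one_ne_zero]

lemma mem_closure_bidisk {z : ℂ × ℂ} (h1 : ‖z.1‖ ≤ 1) (h2 : ‖z.2‖ ≤ 1) :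
    z ∈ closure bidisk := by
  rw [closure_bidisk]
  constructor
  · simpa [Metric.mem_closedBall, Complex.dist_eq] using h1
  · simpa [Metric.mem_closedBall, Complex.dist_eq] using h2

lemma uniqueDiffOn_closure_bidisk : UniqueDiffOn ℝ (closure bidisk) := by
  apply uniqueDiffOn_convex
  · rw [closure_bidisk]
    exact (convex_closedBall (0:ℂ) 1).prod (convex_closedBall (0:ℂ) 1)
  · refine ⟨((0:ℂ), (0:ℂ)), ?_⟩
    have hsub : bidisk ⊆ interior (closure bidisk) :=
      isOpen_bidisk.subset_interior_iff.mpr subset_closure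
    exact hsub (by simp [bidisk])

lemma abs_le_one_on_closure (χ : ℂ × ℂ → ℂ) (hcont : ContinuousOn χ (closure bidisk))
    (hb : ∀ z ∈ bidisk, ‖χ z‖ < 1) {z : ℂ × ℂ} (hz : z ∈ closure bidisk) :
    ‖χ z‖ ≤ 1 := by
  have hne : (𝓝[bidisk] z).NeBot := mem_closure_iff_nhdsWithin_neBot.mp hz
  have ht : Filter.Tendsto (fun w => ‖χ w‖) (𝓝[bidisk] z)
      (𝓝 (‖χ z‖)) :=
    continuous_norm.continuousAt.comp_continuousWithinAt
      ((hcont z hz).mono subset_closure)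
  exact le_of_tendsto ht (eventually_mem_nhdsWithin.mono fun w hw => (hb w hw).le)

lemma clinear (χ : ℂ × ℂ → ℂ) (hhol : DifferentiableOn ℂ χ bidisk)
    (hC2 : ContDiffOn ℝ 2 χ (closure bidisk)) {ζ : ℂ × ℂ} (hζ : ζ ∈ closure bidisk)
    (w : ℂ) (v : ℂ × ℂ) :
    fderivWithin ℝ χ (closure bidisk) ζ (w • v)
      = w • fderivWithin ℝ χ (closure bidisk) ζ v := by
  have hUD : UniqueDiffOn ℝ (closure bidisk) := uniqueDiffOn_closure_bidisk
  have hcf : ContinuousOn (fun z => fderivWithin ℝ χ (closure bidisk) z) (closure bidisk) :=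
    hC2.continuousOn_fderivWithin hUD one_le_two
  set g : ℂ × ℂ → ℂ := fun z => fderivWithin ℝ χ (closure bidisk) z (w • v)
      - w • fderivWithin ℝ χ (closure bidisk) z v with hgdef
  have hgc : ContinuousOn g (closure bidisk) :=
    (hcf.clm_apply continuousOn_const).sub ((hcf.clm_apply continuousOn_const).const_smul w)
  have hg0 : ∀ z ∈ bidisk, g z = 0 := by
    intro z hz
    have hopen : closure bidisk ∈ 𝓝 z :=
      Filter.mem_of_superset (isOpen_bidisk.mem_nhds hz) subset_closure
    have hd : DifferentiableAt ℂ χ z := hhol.differentiableAt (isOpen_bidisk.mem_nhds hz)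
    have e1 : fderivWithin ℝ χ (closure bidisk) z = fderiv ℝ χ z :=
      fderivWithin_of_mem_nhds hopen
    have e2 : fderiv ℝ χ z = (fderiv ℂ χ z).restrictScalars ℝ :=
      hd.fderiv_restrictScalars ℝ
    simp only [hgdef, e1, e2, ContinuousLinearMap.coe_restrictScalars']
    rw [(fderiv ℂ χ z).map_smul w v, sub_self]
  have hne : (𝓝[bidisk] ζ).NeBot := mem_closure_iff_nhdsWithin_neBot.mp hζ
  have ht1 : Filter.Tendsto g (𝓝[bidisk] ζ) (𝓝 (g ζ)) :=
    (hgc ζ hζ).mono subset_closure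
  have ht2 : Filter.Tendsto g (𝓝[bidisk] ζ) (𝓝 0) := by
    apply Filter.Tendsto.congr' _ tendsto_const_nhds
    filter_upwards [self_mem_nhdsWithin] with z hz
    exact (hg0 z hz).symm
  have hgζ : g ζ = 0 := tendsto_nhds_unique ht1 ht2
  have := hgdef ▸ hgζ
  exact sub_eq_zero.mp this

lemma maxOn_re (F : ℝ → ℂ) (w : ℂ) (hF : HasDerivAt F w 0)
    (hle : ∀ t, ‖F t‖ ≤ 1) (h0 : ‖F 0‖ = 1) :
    ((starRingEnd ℂ) (F 0) * w).re = 0 := by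
  have hre : HasDerivAt (fun t => (F t).re) w.re 0 :=
    Complex.reCLM.hasFDerivAt.comp_hasDerivAt 0 hF
  have him : HasDerivAt (fun t => (F t).im) w.im 0 :=
    Complex.imCLM.hasFDerivAt.comp_hasDerivAt 0 hF
  have hu : HasDerivAt (fun t => (F t).re * (F t).re + (F t).im * (F t).im)
      (w.re * (F 0).re + (F 0).re * w.re + (w.im * (F 0).im + (F 0).im * w.im)) 0 :=
    (hre.mul hre).add (him.mul him)
  have hmax : IsLocalMax (fun t => (F t).re * (F t).re + (F t).im * (F t).im) 0 := by
    apply Filter.Eventually.of_forall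
    intro t
    have h1 : Complex.normSq (F t) ≤ 1 := by
      rw [Complex.normSq_eq_norm_sq]
      nlinarith [hle t, norm_nonneg (F t)]
    have h2 : Complex.normSq (F 0) = 1 := by rw [Complex.normSq_eq_norm_sq, h0]; norm_num
    simp only [Complex.normSq_apply] at h1 h2
    simp only [h2] at h1 ⊢
    exact h1
  have hz := hmax.hasDerivAt_eq_zero hu
  have : ((starRingEnd ℂ) (F 0) * w).re = (F 0).re * w.re + (F 0).im * w.im := by
    simp [Complex.mul_re]
  rw [this]
  linarith

end Statement0Aux
lemma angular (χ : ℂ × ℂ → ℂ) (hhol : DifferentiableOn ℂ χ bidisk)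
    (hb : ∀ z ∈ bidisk, ‖χ z‖ < 1)
    (hC2 : ContDiffOn ℝ 2 χ (closure bidisk))
    {ζ : ℂ × ℂ} (hζ1 : ‖ζ.1‖ = 1) (hζ2 : ‖ζ.2‖ = 1)
    (hχ : ‖χ ζ‖ = 1) :
    wirt1 χ (closure bidisk) ζ = fderivWithin ℝ χ (closure bidisk) ζ (1, 0) ∧
    wirt2 χ (closure bidisk) ζ = fderivWithin ℝ χ (closure bidisk) ζ (0, 1) ∧
    (ζ.1 * wirt1 χ (closure bidisk) ζ / χ ζ).im = 0 ∧
    (ζ.2 * wirt2 χ (closure bidisk) ζ / χ ζ).im = 0 := by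
  have hζS : ζ ∈ closure bidisk := mem_closure_bidisk hζ1.le hζ2.le
  set L := fderivWithin ℝ χ (closure bidisk) ζ with hLdef
  have hlin : ∀ (w : ℂ) (v : ℂ × ℂ), L (w • v) = w • L v :=
    fun w v => clinear χ hhol hC2 hζS w v
  have hL : HasFDerivWithinAt χ L (closure bidisk) ζ :=
    ((hC2.differentiableOn two_ne_zero) ζ hζS).hasFDerivWithinAt
  -- wirt = L applied to basis vectors
  have hI1 : L (Complex.I, 0) = Complex.I * L (1, 0) := by
    have h : ((Complex.I : ℂ), (0 : ℂ)) = Complex.I • ((1 : ℂ), (0 : ℂ)) := by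
      simp [Prod.smul_mk]
    rw [h, hlin]; simp
  have hI2 : L (0, Complex.I) = Complex.I * L (0, 1) := by
    have h : ((0 : ℂ), (Complex.I : ℂ)) = Complex.I • ((0 : ℂ), (1 : ℂ)) := by
      simp [Prod.smul_mk]
    rw [h, hlin]; simp
  have hW1 : wirt1 χ (closure bidisk) ζ = L (1, 0) := by
    rw [wirt1, ← hLdef, hI1]
    linear_combination (-(L ((1 : ℂ), (0 : ℂ))) / 2) * Complex.I_mul_I
  have hW2 : wirt2 χ (closure bidisk) ζ = L (0, 1) := by
    rw [wirt2, ← hLdef, hI2]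
    linear_combination (-(L ((0 : ℂ), (1 : ℂ))) / 2) * Complex.I_mul_I
  -- inverse of χ ζ is its conjugate
  have hnsq : Complex.normSq (χ ζ) = 1 := by rw [Complex.normSq_eq_norm_sq, hχ]; norm_num
  have hinv : (χ ζ)⁻¹ = (starRingEnd ℂ) (χ ζ) := by
    rw [Complex.inv_def, hnsq]; simp
  -- generic direction argument
  have key : ∀ (γ : ℝ → ℂ × ℂ) (vd : ℂ × ℂ), HasDerivAt γ vd 0 → (∀ t, γ t ∈ closure bidisk) →
      γ 0 = ζ → ((starRingEnd ℂ) (χ ζ) * L vd).re = 0 := by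
    intro γ vd hγ hmaps hγ0
    have hF : HasDerivAt (χ ∘ γ) (L vd) 0 :=
      hasDerivWithinAt_univ.mp <|
        hL.comp_hasDerivWithinAt_of_eq (0 : ℝ) hγ.hasDerivWithinAt
          (fun t _ => hmaps t) hγ0.symm
    have habs : ∀ t, ‖(χ ∘ γ) t‖ ≤ 1 := fun t =>
      abs_le_one_on_closure χ hC2.continuousOn hb (hmaps t)
    have h0 : (χ ∘ γ) 0 = χ ζ := by simp [Function.comp, hγ0]
    have := maxOn_re (χ ∘ γ) (L vd) hF habs (by rw [h0]; exact hχ)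
    rwa [h0] at this
  -- direction 1
  have him1 : (ζ.1 * L (1, 0) / χ ζ).im = 0 := by
    have hγ1 : HasDerivAt (fun t : ℝ => Complex.exp (t * Complex.I) * ζ.1)
        (Complex.I * ζ.1) 0 := by
      have h1 : HasDerivAt (fun w : ℂ => w * Complex.I) Complex.I (0 : ℂ) := by
        simpa using (hasDerivAt_id (0 : ℂ)).mul_const Complex.I
      have h2 := (h1.cexp).mul_const ζ.1
      have h3 : HasDerivAt (fun w : ℂ => Complex.exp (w * Complex.I) * ζ.1)
          (Complex.I * ζ.1) (0 : ℂ) := by simpa using h2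
      simpa using h3.comp_ofReal
    have hγ : HasDerivAt (fun t : ℝ => (Complex.exp (t * Complex.I) * ζ.1, ζ.2))
        (Complex.I * ζ.1, 0) 0 := hγ1.prodMk (hasDerivAt_const 0 ζ.2)
    have hmaps : ∀ t : ℝ, (Complex.exp ((t : ℂ) * Complex.I) * ζ.1, ζ.2) ∈ closure bidisk := by
      intro t
      apply mem_closure_bidisk
      · simp [map_mul, Complex.norm_exp_ofReal_mul_I, hζ1]
      · simp [hζ2]
    have hγ0 : ((fun t : ℝ => (Complex.exp (t * Complex.I) * ζ.1, ζ.2)) 0) = ζ := by simp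
    have hre := key _ _ hγ hmaps hγ0
    have hIv : L (Complex.I * ζ.1, 0) = Complex.I * ζ.1 * L (1, 0) := by
      have h : ((Complex.I * ζ.1 : ℂ), (0 : ℂ)) = (Complex.I * ζ.1) • ((1 : ℂ), (0 : ℂ)) := by
        simp [Prod.smul_mk]
      rw [h, hlin]; simp
    rw [hIv] at hre
    have h2 : (starRingEnd ℂ) (χ ζ) * (Complex.I * ζ.1 * L (1, 0))
        = (ζ.1 * L (1, 0) * (starRingEnd ℂ) (χ ζ)) * Complex.I := by ring
    rw [h2, Complex.mul_I_re] at hre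
    rw [div_eq_mul_inv, hinv]
    linarith
  -- direction 2
  have him2 : (ζ.2 * L (0, 1) / χ ζ).im = 0 := by
    have hγ1 : HasDerivAt (fun t : ℝ => Complex.exp (t * Complex.I) * ζ.2)
        (Complex.I * ζ.2) 0 := by
      have h1 : HasDerivAt (fun w : ℂ => w * Complex.I) Complex.I (0 : ℂ) := by
        simpa using (hasDerivAt_id (0 : ℂ)).mul_const Complex.I
      have h2 := (h1.cexp).mul_const ζ.2
      have h3 : HasDerivAt (fun w : ℂ => Complex.exp (w * Complex.I) * ζ.2)
          (Complex.I * ζ.2) (0 : ℂ) := by simpa using h2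
      simpa using h3.comp_ofReal
    have hγ : HasDerivAt (fun t : ℝ => (ζ.1, Complex.exp (t * Complex.I) * ζ.2))
        (0, Complex.I * ζ.2) 0 := (hasDerivAt_const 0 ζ.1).prodMk hγ1
    have hmaps : ∀ t : ℝ, (ζ.1, Complex.exp ((t : ℂ) * Complex.I) * ζ.2) ∈ closure bidisk := by
      intro t
      apply mem_closure_bidisk
      · simp [hζ1]
      · simp [map_mul, Complex.norm_exp_ofReal_mul_I, hζ2]
    have hγ0 : ((fun t : ℝ => (ζ.1, Complex.exp (t * Complex.I) * ζ.2)) 0) = ζ := by simp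
    have hre := key _ _ hγ hmaps hγ0
    have hIv : L (0, Complex.I * ζ.2) = Complex.I * ζ.2 * L (0, 1) := by
      have h : ((0 : ℂ), (Complex.I * ζ.2 : ℂ)) = (Complex.I * ζ.2) • ((0 : ℂ), (1 : ℂ)) := by
        simp [Prod.smul_mk]
      rw [h, hlin]; simp
    rw [hIv] at hre
    have h2 : (starRingEnd ℂ) (χ ζ) * (Complex.I * ζ.2 * L (0, 1))
        = (ζ.2 * L (0, 1) * (starRingEnd ℂ) (χ ζ)) * Complex.I := by ring
    rw [h2, Complex.mul_I_re] at hre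
    rw [div_eq_mul_inv, hinv]
    linarith
  exact ⟨hW1, hW2, by rw [hW1]; exact him1, by rw [hW2]; exact him2⟩
lemma li_iff (a b c d : ℝ) :
    LinearIndependent ℝ ![![a, b], ![c, d]] ↔ a * d - b * c ≠ 0 := by
  have h := Matrix.linearIndependent_rows_iff_isUnit (K := ℝ) (A := !![a, b; c, d])
  rw [Matrix.isUnit_iff_isUnit_det, Matrix.det_fin_two_of, isUnit_iff_ne_zero] at h
  exact Iff.trans (by constructor <;> (intro hli; convert hli using 1 <;> rfl)) h
/-- For a holomorphic self-map Φ = (φ,ψ) of the bidisc which is C² up to the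
closed bidisc, at any ζ ∈ 𝕋² with Φ(ζ) ∈ 𝕋²: (i) the angular derivatives
ζⱼ·∂χ/∂zⱼ(ζ)/χ(ζ) are real, and (ii) the Jacobian d_ζΦ is invertible iff the two
angular-gradient vectors are linearly independent over ℝ (transversality). -/
theorem statement0
    (φ ψ : ℂ × ℂ → ℂ)
    (hφhol : DifferentiableOn ℂ φ bidisk)
    (hψhol : DifferentiableOn ℂ ψ bidisk)
    (hmap : ∀ z ∈ bidisk, (φ z, ψ z) ∈ bidisk)
    (hφC2 : ContDiffOn ℝ 2 φ (closure bidisk))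
    (hψC2 : ContDiffOn ℝ 2 ψ (closure bidisk))
    (ζ : ℂ × ℂ) (hζ1 : ‖ζ.1‖ = 1) (hζ2 : ‖ζ.2‖ = 1)
    (hΦζ1 : ‖φ ζ‖ = 1) (hΦζ2 : ‖ψ ζ‖ = 1) :
    ((ζ.1 * wirt1 φ (closure bidisk) ζ / φ ζ).im = 0 ∧
     (ζ.2 * wirt2 φ (closure bidisk) ζ / φ ζ).im = 0 ∧
     (ζ.1 * wirt1 ψ (closure bidisk) ζ / ψ ζ).im = 0 ∧
     (ζ.2 * wirt2 ψ (closure bidisk) ζ / ψ ζ).im = 0) ∧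
    (Matrix.det !![wirt1 φ (closure bidisk) ζ, wirt2 φ (closure bidisk) ζ;
                   wirt1 ψ (closure bidisk) ζ, wirt2 ψ (closure bidisk) ζ] ≠ 0 ↔
      LinearIndependent ℝ
        ![![(ζ.1 * wirt1 φ (closure bidisk) ζ / φ ζ).re,
            (ζ.2 * wirt2 φ (closure bidisk) ζ / φ ζ).re],
          ![(ζ.1 * wirt1 ψ (closure bidisk) ζ / ψ ζ).re,
            (ζ.2 * wirt2 ψ (closure bidisk) ζ / ψ ζ).re]]) := by
  have hbφ : ∀ z ∈ bidisk, ‖φ z‖ < 1 := fun z hz => (hmap z hz).1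
  have hbψ : ∀ z ∈ bidisk, ‖ψ z‖ < 1 := fun z hz => (hmap z hz).2
  obtain ⟨e1, e2, hA, hB⟩ := angular φ hφhol hbφ hφC2 hζ1 hζ2 hΦζ1
  obtain ⟨e3, e4, hC, hD⟩ := angular ψ hψhol hbψ hψC2 hζ1 hζ2 hΦζ2
  refine ⟨⟨hA, hB, hC, hD⟩, ?_⟩
  set A := ζ.1 * wirt1 φ (closure bidisk) ζ / φ ζ with hAdef
  set B := ζ.2 * wirt2 φ (closure bidisk) ζ / φ ζ with hBdef
  set C := ζ.1 * wirt1 ψ (closure bidisk) ζ / ψ ζ with hCdef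
  set D := ζ.2 * wirt2 ψ (closure bidisk) ζ / ψ ζ with hDdef
  have hz1 : ζ.1 ≠ 0 := by intro h; rw [h] at hζ1; simp at hζ1
  have hz2 : ζ.2 ≠ 0 := by intro h; rw [h] at hζ2; simp at hζ2
  have hφ0 : φ ζ ≠ 0 := by intro h; rw [h] at hΦζ1; simp at hΦζ1
  have hψ0 : ψ ζ ≠ 0 := by intro h; rw [h] at hΦζ2; simp at hΦζ2
  have hA' : A = ((A.re : ℝ) : ℂ) := Complex.ext (by simp) (by simp [hA])
  have hB' : B = ((B.re : ℝ) : ℂ) := Complex.ext (by simp) (by simp [hB])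
  have hC' : C = ((C.re : ℝ) : ℂ) := Complex.ext (by simp) (by simp [hC])
  have hD' : D = ((D.re : ℝ) : ℂ) := Complex.ext (by simp) (by simp [hD])
  have f1 : wirt1 φ (closure bidisk) ζ = ((A.re : ℝ) : ℂ) * φ ζ / ζ.1 := by
    rw [← hA', hAdef]; field_simp
  have f2 : wirt2 φ (closure bidisk) ζ = ((B.re : ℝ) : ℂ) * φ ζ / ζ.2 := by
    rw [← hB', hBdef]; field_simp
  have f3 : wirt1 ψ (closure bidisk) ζ = ((C.re : ℝ) : ℂ) * ψ ζ / ζ.1 := by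
    rw [← hC', hCdef]; field_simp
  have f4 : wirt2 ψ (closure bidisk) ζ = ((D.re : ℝ) : ℂ) * ψ ζ / ζ.2 := by
    rw [← hD', hDdef]; field_simp
  have hdet : Matrix.det !![wirt1 φ (closure bidisk) ζ, wirt2 φ (closure bidisk) ζ;
      wirt1 ψ (closure bidisk) ζ, wirt2 ψ (closure bidisk) ζ]
      = (φ ζ * ψ ζ / (ζ.1 * ζ.2)) * (((A.re * D.re - B.re * C.re : ℝ)) : ℂ) := by
    rw [Matrix.det_fin_two_of, f1, f2, f3, f4]
    push_cast
    field_simp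
  rw [hdet, li_iff]
  constructor
  · intro h h0
    apply h
    rw [h0]
    simp
  · intro h
    exact mul_ne_zero (div_ne_zero (mul_ne_zero hφ0 hψ0) (mul_ne_zero hz1 hz2))
      (Complex.ofReal_ne_zero.mpr h)

end
end

section
/- Let ψ : 𝔻² → 𝔻 be holomorphic and extend to a C² map on the closed bidisc, with ψ(1,1) = 1 and (∂ψ/∂z2)(1,1) = 0. Then ψ(1, z2) = 1 for every z2 in the closed unit disc (i.e. the boundary slice z2 ↦ ψ(1, z2) is identically 1). -/
open MeasureTheory Complex Set

noncomputable section

private lemma jc_eqOn_closure {E F : Type*} [TopologicalSpace E] [TopologicalSpace F]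
    [T2Space F] {f : E → F} {s : Set E} {c : F} (hf : ContinuousOn f (closure s))
    (h : ∀ x ∈ s, f x = c) {x : E} (hx : x ∈ closure s) : f x = c := by
  have hne : (nhdsWithin x s).NeBot := mem_closure_iff_nhdsWithin_neBot.1 hx
  have h1 : Filter.Tendsto f (nhdsWithin x s) (nhds (f x)) :=
    ((hf x hx).mono subset_closure)
  have h2 : Filter.Tendsto f (nhdsWithin x s) (nhds c) := by
    refine Filter.Tendsto.congr' ?_ tendsto_const_nhds
    filter_upwards [self_mem_nhdsWithin] with y hy using (h y hy).symm
  exact tendsto_nhds_unique h1 h2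

private lemma jc_le_on_closure {E : Type*} [TopologicalSpace E] {f : E → ℝ} {s : Set E} {c : ℝ}
    (hf : ContinuousOn f (closure s)) (h : ∀ x ∈ s, f x ≤ c) {x : E} (hx : x ∈ closure s) :
    f x ≤ c := by
  have hne : (nhdsWithin x s).NeBot := mem_closure_iff_nhdsWithin_neBot.1 hx
  refine le_of_tendsto ((hf x hx).mono subset_closure) ?_
  filter_upwards [self_mem_nhdsWithin] with y hy using h y hy

set_option maxHeartbeats 1000000 in

private lemma nsq_sub (w b : ℂ) :
    Complex.normSq (w - b) = Complex.normSq w + Complex.normSq b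
      - 2*(w.re*b.re + w.im*b.im) := by
  simp [Complex.normSq_apply, Complex.sub_re, Complex.sub_im]; ring

private lemma nsq_moeb (w b : ℂ) :
    Complex.normSq (1 - (starRingEnd ℂ) b * w)
      = 1 + Complex.normSq b * Complex.normSq w - 2*(w.re*b.re + w.im*b.im) := by
  simp [Complex.normSq_apply, Complex.sub_re, Complex.sub_im, Complex.mul_re, Complex.mul_im]
  ring

private lemma jc_habsr (r : ℝ) (hr : 0 ≤ r) : ‖((r:ℝ):ℂ)‖ = r := by
  rw [Complex.norm_of_nonneg hr]

private lemma jc_contradiction {g : ℂ → ℂ} {M : ℝ} (hMpos : 0 < M) (hM1 : 1 ≤ M)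
    (hg_hol : DifferentiableOn ℂ g (Metric.ball (0:ℂ) 1))
    (hg_le : ∀ w : ℂ, ‖w‖ ≤ 1 → ‖g w‖ ≤ 1)
    (hmaxc : ∀ w ∈ Metric.ball (0:ℂ) 1, ‖g w‖ < 1)
    (hg_taylor : ∀ r : ℝ, 0 ≤ r → r ≤ 1 → ‖g r - 1‖ ≤ M * (1-r)^2) :
    False := by
  have hb1 : ‖g 0‖ < 1 := hmaxc 0 (by simp)
  set b : ℂ := g 0 with hb
  have hden : ∀ w ∈ Metric.ball (0:ℂ) 1, (1:ℂ) - (starRingEnd ℂ) b * g w ≠ 0 := by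
    intro w hw h
    have h' : (starRingEnd ℂ) b * g w = 1 := (sub_eq_zero.1 h).symm
    have h2 := congrArg norm h'
    rw [norm_mul, Complex.norm_conj, norm_one] at h2
    have hglt := hmaxc w hw
    nlinarith [norm_nonneg b, norm_nonneg (g w)]
  set F : ℂ → ℂ := fun w => (g w - b) / (1 - (starRingEnd ℂ) b * g w) with hF
  have hF_hol : DifferentiableOn ℂ F (Metric.ball (0:ℂ) 1) :=
    (hg_hol.sub (differentiableOn_const b)).div
      ((differentiableOn_const 1).sub ((differentiableOn_const _).mul hg_hol)) hden
  have hF0 : F 0 = 0 := by simp [hF, hb]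
  have hFmaps : Set.MapsTo F (Metric.ball (0:ℂ) 1) (Metric.ball (0:ℂ) 1) := by
    intro w hw
    rw [Metric.mem_ball, Complex.dist_eq, sub_zero]
    have hd := hden w hw
    have hdpos : 0 < ‖1 - (starRingEnd ℂ) b * g w‖ := norm_pos_iff.mpr hd
    have hgw1 := hmaxc w hw
    rw [hF]; simp only
    rw [norm_div, div_lt_one hdpos]
    have hsq : (‖g w - b‖)^2 < (‖1 - (starRingEnd ℂ) b * g w‖)^2 := by
      rw [Complex.sq_norm, Complex.sq_norm, nsq_sub, nsq_moeb]
      have h1 : Complex.normSq b < 1 := by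
        rw [← Complex.sq_norm]; nlinarith [norm_nonneg b]
      have h2 : Complex.normSq (g w) < 1 := by
        rw [← Complex.sq_norm]; nlinarith [norm_nonneg (g w)]
      nlinarith
    exact lt_of_pow_lt_pow_left₀ 2 (norm_nonneg _) hsq
  have key : ∀ r : ℝ, 0 ≤ r → r < 1 →
      (1 - ‖b‖)^2 ≤ 2 * M * (1 - r) := by
    intro r hr0 hr1
    have hrmem : ((r:ℝ):ℂ) ∈ Metric.ball (0:ℂ) 1 := by
      simp [Metric.mem_ball, Complex.dist_eq, _root_.abs_of_nonneg hr0, hr1]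
    have hsch := Complex.norm_le_norm_of_mapsTo_ball hF_hol (hFmaps.mono_right Metric.ball_subset_closedBall) hF0
      (show ‖((r:ℝ):ℂ)‖ < 1 by rw [jc_habsr r hr0]; exact hr1)
    rw [jc_habsr r hr0] at hsch
    have hfr : ‖g ((r:ℝ):ℂ) - b‖
        ≤ r * ‖1 - (starRingEnd ℂ) b * g ((r:ℝ):ℂ)‖ := by
      have hd := hden _ hrmem
      have hdpos : 0 < ‖1 - (starRingEnd ℂ) b * g ((r:ℝ):ℂ)‖ := norm_pos_iff.mpr hd
      rw [hF] at hsch; simp only at hsch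
      rw [norm_div, div_le_iff₀ hdpos] at hsch
      exact hsch
    set w : ℂ := g ((r:ℝ):ℂ) with hwdef
    set a : ℝ := ‖b‖ with ha
    set t : ℝ := ‖w‖ with htd
    have ht1 : t ≤ 1 := by
      have := hg_le ((r:ℝ):ℂ) (by rw [jc_habsr r hr0]; linarith)
      rw [htd, hwdef]
      exact this
    have ht0 : 0 ≤ t := norm_nonneg w
    have ha0 : 0 ≤ a := norm_nonneg b
    have ha1 : a < 1 := hb1
    have hu : w.re * b.re + w.im * b.im ≤ a := by
      have he : w.re * b.re + w.im * b.im = (w * (starRingEnd ℂ) b).re := by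
        simp [Complex.mul_re, Complex.conj_re, Complex.conj_im]
      rw [he]
      calc (w * (starRingEnd ℂ) b).re ≤ ‖w * (starRingEnd ℂ) b‖ :=
            Complex.re_le_norm _
        _ = t * a := by rw [norm_mul, Complex.norm_conj]
        _ ≤ a := by nlinarith
    have h1 : Complex.normSq (w - b) ≤ r^2 * Complex.normSq (1 - (starRingEnd ℂ) b * w) := by
      rw [← Complex.sq_norm, ← Complex.sq_norm]
      calc (‖w - b‖)^2
          ≤ (r * ‖1 - (starRingEnd ℂ) b * w‖)^2 :=
            pow_le_pow_left₀ (norm_nonneg _) hfr 2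
        _ = r^2 * (‖1 - (starRingEnd ℂ) b * w‖)^2 := by ring
    rw [nsq_sub, nsq_moeb] at h1
    have hAe : Complex.normSq b = a^2 := by rw [ha, Complex.sq_norm]
    have hTe : Complex.normSq w = t^2 := by rw [htd, Complex.sq_norm]
    rw [hAe, hTe] at h1
    have hjulia : (1 - r^2) * (1 - a)^2 ≤ 1 - t^2 := by
      nlinarith [mul_nonneg (sub_nonneg.2 (show r^2 ≤ 1 by nlinarith))
          (sub_nonneg.2 hu), mul_nonneg (sq_nonneg r) (sub_nonneg.2 (show t^2 ≤ 1 by nlinarith)),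
        sq_nonneg a, mul_nonneg (mul_nonneg ha0 ha0) (sq_nonneg r)]
    have htay : 1 - t ≤ M * (1 - r)^2 := by
      have h2 : |‖(1:ℂ)‖ - ‖w‖| ≤ ‖1 - w‖ :=
        abs_norm_sub_norm_le 1 w
      have h3 : ‖1 - w‖ = ‖w - 1‖ := by
        exact norm_sub_rev 1 w
      have h4 := hg_taylor r hr0 hr1.le
      rw [h3] at h2
      rw [norm_one] at h2
      rw [← hwdef] at h4
      have h5 := (abs_le.1 h2).2
      rw [← htd] at h5
      linarith
    nlinarith [hjulia, htay, hMpos, mul_nonneg (sub_nonneg.2 hr1.le) (sq_nonneg (1-a)),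
      mul_nonneg (mul_nonneg (sub_nonneg.2 hr1.le) hMpos.le) (sub_nonneg.2 hr1.le)]
  have hapos : 0 < (1 - ‖b‖)^2 := pow_pos (by linarith) 2
  have hale : (1 - ‖b‖)^2 ≤ 1 := by
    nlinarith [norm_nonneg b]
  set r : ℝ := 1 - (1 - ‖b‖)^2 / (4 * M) with hr
  have hr0 : 0 ≤ r := by
    rw [hr]
    have hq : (1 - ‖b‖)^2 / (4 * M) ≤ 1/4 := by
      rw [div_le_iff₀ (by positivity)]
      nlinarith [hM1]
    linarith
  have hr1 : r < 1 := by
    rw [hr]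
    have : 0 < (1 - ‖b‖)^2 / (4 * M) := by positivity
    linarith
  have hkey := key r hr0 hr1
  have hsimp : 2 * M * (1 - r) = (1 - ‖b‖)^2 / 2 := by
    rw [hr]
    field_simp
    ring
  rw [hsimp] at hkey
  linarith

set_option maxHeartbeats 1000000 in
/-- Julia–Carathéodory rigidity: if ψ : 𝔻² → 𝔻 is holomorphic, C² up to
the closed bidisc, with ψ(1,1) = 1 and ∂ψ/∂z₂(1,1) = 0, then the boundary slice
z₂ ↦ ψ(1,z₂) is identically 1 on the closed unit disc. -/
theorem statement16
    (ψ : ℂ × ℂ → ℂ)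
    (hψhol : DifferentiableOn ℂ ψ bidisk)
    (hψmap : ∀ z ∈ bidisk, ‖ψ z‖ < 1)
    (hψC2 : ContDiffOn ℝ 2 ψ (closure bidisk))
    (hψ11 : ψ (1, 1) = 1)
    (hψd2 : wirt2 ψ (closure bidisk) (1, 1) = 0) :
    ∀ z2 : ℂ, ‖z2‖ ≤ 1 → ψ (1, z2) = 1 := by
  -- main proof
  set s : Set (ℂ × ℂ) := closure bidisk with hs
  have hbid : bidisk = (Metric.ball (0:ℂ) 1) ×ˢ (Metric.ball (0:ℂ) 1) := by
    ext z; simp [bidisk, Metric.mem_ball, Complex.dist_eq, Set.mem_prod]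
  have hbo : IsOpen bidisk := by rw [hbid]; exact Metric.isOpen_ball.prod Metric.isOpen_ball
  have hsE : s = (Metric.closedBall (0:ℂ) 1) ×ˢ (Metric.closedBall (0:ℂ) 1) := by
    rw [hs, hbid, closure_prod_eq, closure_ball _ one_ne_zero]
  have hsu : UniqueDiffOn ℝ s := by
    rw [hsE]
    apply uniqueDiffOn_convex ((convex_closedBall _ _).prod (convex_closedBall _ _))
    rw [interior_prod_eq, interior_closedBall _ one_ne_zero]
    exact (Metric.nonempty_ball.2 one_pos).prod (Metric.nonempty_ball.2 one_pos)
  have hsconv : Convex ℝ s := by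
    rw [hsE]; exact (convex_closedBall _ _).prod (convex_closedBall _ _)
  have hscomp : IsCompact s := by
    rw [hsE]; exact (isCompact_closedBall _ _).prod (isCompact_closedBall _ _)
  set D : (ℂ × ℂ) → ((ℂ × ℂ) →L[ℝ] ℂ) := fderivWithin ℝ ψ s with hD
  have hDcont : ContinuousOn D s := hψC2.continuousOn_fderivWithin hsu (by norm_num)
  have hlin : ∀ z ∈ s, D z (0, Complex.I) = Complex.I * D z (0, 1) := by
    intro z hz
    have key : (fun y => D y (0, Complex.I) - Complex.I * D y (0,1)) z = 0 := by
      refine jc_eqOn_closure (s := bidisk) (f := fun y => D y (0, Complex.I) - Complex.I * D y (0,1)) (c := (0:ℂ)) ?_ ?_ hz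
      · exact ((hDcont.clm_apply continuousOn_const).sub
          (continuousOn_const.mul (hDcont.clm_apply continuousOn_const)))
      · intro y hy
        have hdy : DifferentiableAt ℂ ψ y := (hψhol y hy).differentiableAt (hbo.mem_nhds hy)
        have h1 : D y = fderiv ℝ ψ y := by
          rw [hD]; exact fderivWithin_of_mem_nhds (mem_nhds_iff.2 ⟨bidisk, subset_closure, hbo, hy⟩)
        have h2 : (fderiv ℂ ψ y).restrictScalars ℝ = fderiv ℝ ψ y :=
          (hdy.fderiv_restrictScalars ℝ).symm
        have h3 : ((0 : ℂ), Complex.I) = Complex.I • ((0:ℂ), (1:ℂ)) := by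
          simp [Prod.ext_iff]
        simp only [h1, ← h2, ContinuousLinearMap.coe_restrictScalars', h3, _root_.map_smul,
          smul_eq_mul, sub_self]
    have := sub_eq_zero.1 key
    simpa using this
  -- membership of slice points
  have hmem : ∀ w : ℂ, ‖w‖ ≤ 1 → ((1:ℂ), w) ∈ s := by
    intro w hw
    rw [hsE]
    constructor <;> simp [Metric.mem_closedBall, Complex.dist_eq, hw]
  -- the slice function
  set g : ℂ → ℂ := fun w => ψ (1, w) with hg
  set c : ℂ → ℂ := fun w => D (1, w) (0, 1) with hc
  set L : ℂ → (ℂ →L[ℝ] ℂ) :=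
    fun w => c w • ((ContinuousLinearMap.id ℂ ℂ).restrictScalars ℝ) with hL
  have hLapply : ∀ w v : ℂ, L w v = c w * v := by intro w v; simp [hL]
  have hψdiff : ∀ z ∈ s, HasFDerivWithinAt ψ (D z) s z := by
    intro z hz
    exact ((hψC2.differentiableOn (by norm_num)) z hz).hasFDerivWithinAt
  have hball : ∀ w : ℂ, w ∈ Metric.closedBall (0:ℂ) 1 → ‖w‖ ≤ 1 := by
    intro w hw; simpa [Metric.mem_closedBall, Complex.dist_eq] using hw
  have hgw : ∀ w ∈ Metric.closedBall (0:ℂ) 1,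
      HasFDerivWithinAt g (L w) (Metric.closedBall (0:ℂ) 1) w := by
    intro w hw
    have hwmem : ((1:ℂ), w) ∈ s := hmem w (hball w hw)
    have hι : HasFDerivWithinAt (fun w : ℂ => ((1:ℂ), w))
        ((0 : ℂ →L[ℝ] ℂ).prod (ContinuousLinearMap.id ℝ ℂ)) (Metric.closedBall (0:ℂ) 1) w :=
      ((hasFDerivAt_const (1:ℂ) w).prodMk (hasFDerivAt_id w)).hasFDerivWithinAt
    have hmaps : Set.MapsTo (fun w : ℂ => ((1:ℂ), w)) (Metric.closedBall (0:ℂ) 1) s :=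
      fun x hx => hmem x (hball x hx)
    have hcomp := (hψdiff _ hwmem).comp w hι hmaps
    refine hcomp.congr_fderiv ?_
    ext v
    have h3 : ((0 : ℂ), v) = v.re • ((0:ℂ), (1:ℂ)) + v.im • ((0:ℂ), Complex.I) := by
      have h4 : (v.re : ℂ) * 1 + (v.im:ℂ) * Complex.I = v := by
        rw [mul_one]; exact Complex.re_add_im v
      simp [Prod.ext_iff, Complex.real_smul, h4]
    have hthis : D (1, w) (0, v) = c w * v := by
      rw [h3, map_add, _root_.map_smul, _root_.map_smul, hlin _ hwmem]
      simp only [smul_eq_mul, Complex.real_smul, hc]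
      linear_combination (D (1, w) (0, 1)) * (Complex.re_add_im v)
    simp only [ContinuousLinearMap.comp_apply, ContinuousLinearMap.prod_apply,
      ContinuousLinearMap.zero_apply, ContinuousLinearMap.coe_id', id_eq, hLapply]
    rw [hthis]
  -- holomorphy of g on the open ball
  have hg_hol : DifferentiableOn ℂ g (Metric.ball (0:ℂ) 1) := by
    intro w hw
    have hnb : Metric.closedBall (0:ℂ) 1 ∈ nhds w :=
      mem_nhds_iff.2 ⟨Metric.ball 0 1, Metric.ball_subset_closedBall, Metric.isOpen_ball, hw⟩
    have hfd : HasFDerivAt g (L w) w :=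
      (hgw w (Metric.ball_subset_closedBall hw)).hasFDerivAt hnb
    have hres : (c w • ContinuousLinearMap.id ℂ ℂ).restrictScalars ℝ = L w := by
      ext v; simp [hL]
    exact (hasFDerivAt_of_restrictScalars ℝ hfd hres).differentiableAt.differentiableWithinAt
  -- continuity of g on the closed ball
  have hg_cont : ContinuousOn g (Metric.closedBall (0:ℂ) 1) := by
    have : ContinuousOn ψ s := hψC2.continuousOn
    exact this.comp ((continuous_const.prodMk continuous_id).continuousOn)
      (fun x hx => hmem x (hball x hx))
  -- |ψ| ≤ 1 on the closure
  have habs : ∀ z ∈ s, ‖ψ z‖ ≤ 1 := by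
    intro z hz
    refine jc_le_on_closure (s := bidisk) (f := fun z => ‖ψ z‖) (c := 1)
      (continuous_norm.comp_continuousOn hψC2.continuousOn) ?_ hz
    intro y hy; exact (hψmap y hy).le
  have hg_le : ∀ w : ℂ, ‖w‖ ≤ 1 → ‖g w‖ ≤ 1 := by
    intro w hw; exact habs _ (hmem w hw)
  have h11 : ((1:ℂ), (1:ℂ)) ∈ s := hmem 1 (by simp)
  -- c 1 = 0
  have hc1 : c 1 = 0 := by
    have h1 : wirt2 ψ s (1, 1) = c 1 := by
      rw [wirt2]
      rw [show fderivWithin ℝ ψ s (1,1) (0, Complex.I) = D (1,1) (0, Complex.I) from rfl,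
        show fderivWithin ℝ ψ s (1,1) ((0:ℂ), (1:ℂ)) = D (1,1) ((0:ℂ),(1:ℂ)) from rfl,
        hlin _ h11, hc]
      field_simp
      linear_combination (-(D (1 : Prod ℂ ℂ) ((0:ℂ),(1:ℂ)))) * Complex.I_sq
    rw [← h1, hs]; exact hψd2
  have hg1 : g 1 = 1 := hψ11
  -- second-derivative bound
  have hDdiff : DifferentiableOn ℝ D s := (hψC2.fderivWithin (m := 1) hsu (by norm_num)).differentiableOn one_ne_zero
  have hD2cont : ContinuousOn (fderivWithin ℝ D s) s :=
    (hψC2.fderivWithin (m := 1) hsu (by norm_num)).continuousOn_fderivWithin hsu le_rfl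
  obtain ⟨M0, hM0⟩ := hscomp.exists_bound_of_continuousOn (f := fderivWithin ℝ D s) hD2cont
  set M : ℝ := max M0 1 with hM
  have hM1 : 1 ≤ M := le_max_right _ _
  have hMpos : 0 < M := lt_of_lt_of_le one_pos hM1
  have hDlip : ∀ w : ℂ, ‖w‖ ≤ 1 → ‖D (1, w) - D (1, 1)‖ ≤ M * ‖w - 1‖ := by
    intro w hw
    have hbound : ∀ x ∈ s, ‖fderivWithin ℝ D s x‖ ≤ M :=
      fun x hx => le_trans (hM0 x hx) (le_max_left _ _)
    have hkey : ‖D (1, w) - D (1, 1)‖ ≤ M * ‖((1:ℂ), w) - ((1:ℂ), (1:ℂ))‖ :=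
      hsconv.norm_image_sub_le_of_norm_fderivWithin_le hDdiff hbound h11 (hmem w hw)
    refine le_trans hkey ?_
    have : ((1:ℂ), w) - ((1:ℂ), (1:ℂ)) = ((0:ℂ), w - 1) := by simp [Prod.ext_iff]
    rw [this]
    have : ‖((0:ℂ), w - 1)‖ = ‖w - 1‖ := by
      simp [Prod.norm_def]
    rw [this]
  have hclip : ∀ w : ℂ, ‖w‖ ≤ 1 → ‖c w‖ ≤ M * ‖w - 1‖ := by
    intro w hw
    have h1 : c w = (D (1, w) - D (1,1)) ((0:ℂ),(1:ℂ)) + c 1 := by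
      simp [hc]
    rw [h1, hc1, add_zero]
    calc ‖(D (1, w) - D (1,1)) ((0:ℂ),(1:ℂ))‖
        ≤ ‖D (1, w) - D (1, 1)‖ * ‖((0:ℂ),(1:ℂ))‖ :=
          (D (1, w) - D (1,1)).le_opNorm _
      _ ≤ M * ‖w - 1‖ := by
          have : ‖((0:ℂ),(1:ℂ))‖ = 1 := by simp [Prod.norm_def]
          rw [this, mul_one]; exact hDlip w hw
  have habsr : ∀ r : ℝ, 0 ≤ r → ‖((r:ℝ):ℂ)‖ = r := by
    intro r hr; rw [Complex.norm_of_nonneg hr]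
  have hLnorm : ∀ x : ℂ, ‖L x‖ = ‖c x‖ := by
    intro x
    simp only [hL]
    rw [norm_smul (c x) ((ContinuousLinearMap.id ℂ ℂ).restrictScalars ℝ),
      ContinuousLinearMap.norm_restrictScalars, ContinuousLinearMap.norm_id]
    simp
  have hg_taylor : ∀ r : ℝ, 0 ≤ r → r ≤ 1 → ‖g r - 1‖ ≤ M * (1-r)^2 := by
    intro r hr0 hr1
    have hA : ((r:ℝ):ℂ) ∈ Metric.closedBall (0:ℂ) 1 := by
      simp [Metric.mem_closedBall, Complex.dist_eq, _root_.abs_of_nonneg hr0, hr1]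
    have hB : (1:ℂ) ∈ Metric.closedBall (0:ℂ) 1 := by
      simp [Metric.mem_closedBall, Complex.dist_eq]
    have hsub : segment ℝ ((r:ℝ):ℂ) 1 ⊆ Metric.closedBall (0:ℂ) 1 :=
      (convex_closedBall _ _).segment_subset hA hB
    have hseg : ∀ x ∈ segment ℝ ((r:ℝ):ℂ) 1, ‖x - 1‖ ≤ 1 - r := by
      rintro x ⟨a, b, ha, hb, hab, rfl⟩
      have habC : (a:ℂ) + (b:ℂ) = 1 := by exact_mod_cast hab
      have hx : (a • ((r:ℝ):ℂ) + b • (1:ℂ)) - 1 = (a:ℂ) * (((r:ℝ):ℂ) - 1) := by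
        simp only [Complex.real_smul]
        linear_combination habC
      rw [hx, norm_mul, Complex.norm_of_nonneg ha]
      have h1 : ((r:ℝ):ℂ) - 1 = (((r - 1 : ℝ)):ℂ) := by push_cast; ring
      rw [h1, Complex.norm_real, Real.norm_eq_abs, _root_.abs_of_nonpos (by linarith)]
      have ha1 : a ≤ 1 := by linarith
      nlinarith
    have hbound : ∀ x ∈ segment ℝ ((r:ℝ):ℂ) 1, ‖L x‖ ≤ M * (1 - r) := by
      intro x hx
      rw [hLnorm]
      calc ‖c x‖ ≤ M * ‖x - 1‖ := hclip x (hball x (hsub hx))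
        _ ≤ M * (1 - r) := by
            exact mul_le_mul_of_nonneg_left (hseg x hx) hMpos.le
    have hfd : ∀ x ∈ segment ℝ ((r:ℝ):ℂ) 1,
        HasFDerivWithinAt g (L x) (segment ℝ ((r:ℝ):ℂ) 1) x :=
      fun x hx => (hgw x (hsub hx)).mono hsub
    have := (convex_segment _ _).norm_image_sub_le_of_norm_hasFDerivWithin_le hfd hbound
      (left_mem_segment ℝ ((r:ℝ):ℂ) 1) (right_mem_segment ℝ ((r:ℝ):ℂ) 1)
    have h2 : ‖(1:ℂ) - ((r:ℝ):ℂ)‖ = 1 - r := by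
      rw [show (1:ℂ) - ((r:ℝ):ℂ) = (((1 - r : ℝ)):ℂ) by push_cast; ring,
        Complex.norm_of_nonneg (by linarith)]
    rw [h2, hg1] at this
    calc ‖g ((r:ℝ):ℂ) - 1‖ = ‖(1:ℂ) - g ((r:ℝ):ℂ)‖ := by
          exact norm_sub_rev _ _
      _ ≤ M * (1-r) * (1-r) := this
      _ = M * (1-r)^2 := by ring
  by_cases hmaxc : ∃ w ∈ Metric.ball (0:ℂ) 1, 1 ≤ ‖g w‖
  · obtain ⟨w0, hw0, hw0ge⟩ := hmaxc
    have hMax : IsMaxOn (norm ∘ g) (Metric.ball (0:ℂ) 1) w0 := by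
      intro x hx
      simp only [Function.comp_apply, Set.mem_setOf_eq]
      exact le_trans (hg_le x (hball x (Metric.ball_subset_closedBall hx))) hw0ge
    have hdc : DiffContOnCl ℂ g (Metric.ball (0:ℂ) 1) :=
      ⟨hg_hol, by rwa [closure_ball (0:ℂ) one_ne_zero]⟩
    have heq := Complex.eqOn_closure_of_isPreconnected_of_isMaxOn_norm
      (convex_ball (0:ℂ) 1).isPreconnected Metric.isOpen_ball hdc hw0 hMax
    rw [closure_ball (0:ℂ) one_ne_zero] at heq
    have h1mem : (1:ℂ) ∈ Metric.closedBall (0:ℂ) 1 := by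
      simp [Metric.mem_closedBall, Complex.dist_eq]
    have hval : g w0 = 1 := by
      have := heq h1mem
      rw [hg1] at this
      exact this.symm
    intro z2 hz2
    have hz2m : z2 ∈ Metric.closedBall (0:ℂ) 1 := by
      simp [Metric.mem_closedBall, Complex.dist_eq, hz2]
    have h := heq hz2m
    rw [Function.const_apply, hval] at h
    exact h
  · exfalso
    push_neg at hmaxc
    exact jc_contradiction hMpos hM1 hg_hol hg_le hmaxc hg_taylor

end
end
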